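/- The two MatchKAT encodings of a priority-ordered match-action table are semantically equivalent at the level of matched rules: for tests b₁,…,b_k and actions p₁,…,p_k, the term b₁p₁ + b̄₁b₂p₂ + … + b̄₁⋯b̄_{k−1}b_kp_k applied to a singleton {π} equals ⟦p_r⟧({π}) where r is the least index with π ∈ ⟦b_r⟧ (and equals ∅ if no rule matches). -/

import Mathlib

/-- Packets: binary strings of length `n`. -/
abbrev Pk (n : ℕ) := List.Vector Bool n

/-- The `p`-th bit of a packet. -/
def getBit {n : ℕ} (π : Pk n) (p : ℕ) : Bool := π.toList.getD p false

/-- The packet `π[p ← k]`. -/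
def setBit {n : ℕ} (π : Pk n) (p : ℕ) (k : Bool) : Pk n :=
  ⟨π.1.set p k, by rw [List.length_set]; exact π.2⟩

/-- MatchKAT terms of packet size `n`, with abstract tests: `testSet B`
is a test whose semantics is `⟦b⟧(P) = P ∩ B`; a negated test `b̄` is
`testSet Bᶜ`, since `P ∩ Bᶜ = P − B`. -/
inductive MK (n : ℕ) : Type
  | bot : MK n
  | top : MK n
  | testSet (B : Set (Pk n)) : MK n
  | assign (p : ℕ) (k : Bool) : MK n
  | plus (a b : MK n) : MK n
  | seq (a b : MK n) : MK n
  | star (a : MK n) : MK n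

/-- Packet filtering semantics of MatchKAT. -/
def mksem {n : ℕ} : MK n → Set (Pk n) → Set (Pk n)
  | .bot, _ => ∅
  | .top, P => P
  | .testSet B, P => P ∩ B
  | .assign p k, P => (fun π => setBit π p k) '' P
  | .plus a b, P => mksem a P ∪ mksem b P
  | .seq a b, P => mksem b (mksem a P)
  | .star a, P => ⋃ m : ℕ, (mksem a)^[m] P

/-- The encoding `b̄₁ ⋯ b̄_{r-1} b_r p_r` of rule `r`: all higher-priority
tests negated, then the test of rule `r`, then its action. -/
def ruleTerm {n : ℕ} (k : ℕ) (B : Fin k → Set (Pk n)) (p : Fin k → MK n)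
    (r : Fin k) : MK n :=
  ((List.finRange k).filter (fun r' => r' < r)).foldr
    (fun r' acc => .seq (.testSet (B r')ᶜ) acc)
    (.seq (.testSet (B r)) (p r))

/-- The priority-table encoding `b₁p₁ + b̄₁b₂p₂ + … + b̄₁⋯b̄_{k−1}b_kp_k`. -/
def table {n : ℕ} (k : ℕ) (B : Fin k → Set (Pk n)) (p : Fin k → MK n) : MK n :=
  (List.finRange k).foldr (fun r acc => .plus (ruleTerm k B p r) acc) .bot

open Classical in
lemma mksem_empty {n : ℕ} (a : MK n) : mksem a (∅ : Set (Pk n)) = ∅ := by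
  induction a with
  | bot => rfl
  | top => rfl
  | testSet B => simp [mksem]
  | assign p k => simp [mksem]
  | plus a b ha hb => simp [mksem, ha, hb]
  | seq a b ha hb => simp [mksem, ha, hb]
  | star a ha =>
    have h : ∀ m, (mksem a)^[m] (∅ : Set (Pk n)) = ∅ := by
      intro m
      induction m with
      | zero => rfl
      | succ m ih => rw [Function.iterate_succ_apply', ih, ha]
    simp [mksem, h]

open Classical in
lemma foldr_neg_sem {n k : ℕ} (B : Fin k → Set (Pk n)) (t : MK n) (π : Pk n)
    (L : List (Fin k)) :
    mksem (L.foldr (fun r' acc => .seq (.testSet (B r')ᶜ) acc) t) {π}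
      = if ∀ r' ∈ L, π ∉ B r' then mksem t {π} else ∅ := by
  induction L with
  | nil => simp
  | cons a L ih =>
    show mksem (L.foldr _ t) (mksem (.testSet (B a)ᶜ) {π}) = _
    by_cases h : π ∈ B a
    · have h1 : mksem (MK.testSet (B a)ᶜ) ({π} : Set (Pk n)) = ∅ := by
        simp [mksem, h]
      rw [h1, mksem_empty]
      simp [h]
    · have h1 : mksem (MK.testSet (B a)ᶜ) ({π} : Set (Pk n)) = {π} := by
        simp [mksem, h]
      rw [h1, ih]
      simp [h]

open Classical in
lemma ruleTerm_sem {n k : ℕ} (B : Fin k → Set (Pk n)) (p : Fin k → MK n)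
    (π : Pk n) (r : Fin k) :
    mksem (ruleTerm k B p r) {π}
      = if π ∈ B r ∧ ∀ r' < r, π ∉ B r' then mksem (p r) {π} else ∅ := by
  rw [ruleTerm, foldr_neg_sem]
  have hmem : ∀ r' : Fin k,
      r' ∈ (List.finRange k).filter (fun r' => r' < r) ↔ r' < r := by
    intro r'; simp [List.mem_filter]
  by_cases hlt : ∀ r' < r, π ∉ B r'
  · have : ∀ r' ∈ (List.finRange k).filter (fun r' => r' < r), π ∉ B r' := by
      intro r' h; exact hlt r' ((hmem r').1 h)
    rw [if_pos this]
    by_cases hr : π ∈ B r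
    · rw [if_pos ⟨hr, hlt⟩]
      show mksem (p r) (mksem (.testSet (B r)) {π}) = _
      have : mksem (MK.testSet (B r)) ({π} : Set (Pk n)) = {π} := by
        simp [mksem, hr]
      rw [this]
    · rw [if_neg (by tauto)]
      show mksem (p r) (mksem (.testSet (B r)) {π}) = _
      have : mksem (MK.testSet (B r)) ({π} : Set (Pk n)) = ∅ := by
        simp [mksem, hr]
      rw [this, mksem_empty]
  · rw [if_neg (fun h => hlt (fun r' hr' => h r' ((hmem r').2 hr'))),
      if_neg (fun h => hlt h.2)]

lemma table_sem {n k : ℕ} (B : Fin k → Set (Pk n)) (p : Fin k → MK n)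
    (π : Pk n) :
    mksem (table k B p) {π} = ⋃ r : Fin k, mksem (ruleTerm k B p r) {π} := by
  rw [table]
  have : ∀ L : List (Fin k),
      mksem (L.foldr (fun r acc => .plus (ruleTerm k B p r) acc) .bot) {π}
        = ⋃ r ∈ L, mksem (ruleTerm k B p r) {π} := by
    intro L
    induction L with
    | nil => simp [mksem]
    | cons a L ih =>
      show mksem (ruleTerm k B p a) {π} ∪ _ = _
      rw [ih]
      ext x
      simp [List.mem_cons, or_and_right, Set.mem_iUnion]
  rw [this]
  ext x
  simp

/-- On a singleton input `{π}`, the priority-table encoding behaves exactly as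
the action of the highest-priority (least-index) matching rule, and drops the
packet when no rule matches. -/
theorem table_correct {n k : ℕ} (B : Fin k → Set (Pk n)) (p : Fin k → MK n)
    (π : Pk n) :
    (∀ r : Fin k, π ∈ B r → (∀ r' : Fin k, r' < r → π ∉ B r') →
        mksem (table k B p) {π} = mksem (p r) {π}) ∧
    ((∀ r : Fin k, π ∉ B r) → mksem (table k B p) {π} = ∅) := by
  constructor
  · intro r hr hmin
    rw [table_sem]
    have hru : mksem (ruleTerm k B p r) {π} = mksem (p r) {π} := by
      rw [ruleTerm_sem, if_pos ⟨hr, hmin⟩]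
    have hother : ∀ r' : Fin k, r' ≠ r → mksem (ruleTerm k B p r') {π} = ∅ := by
      intro r' hne
      rw [ruleTerm_sem, if_neg]
      rintro ⟨h1, h2⟩
      rcases lt_or_gt_of_ne hne with h | h
      · exact hmin r' h h1
      · exact h2 r h hr
    ext x
    simp only [Set.mem_iUnion]
    constructor
    · rintro ⟨r', hx⟩
      by_cases hne : r' = r
      · subst hne; rwa [hru] at hx
      · rw [hother r' hne] at hx; exact absurd hx (Set.notMem_empty x)
    · intro hx; exact ⟨r, by rwa [hru]⟩
  · intro hno
    rw [table_sem]
    ext x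
    simp only [Set.mem_iUnion, Set.mem_empty_iff_false, iff_false]
    rintro ⟨r, hx⟩
    rw [ruleTerm_sem, if_neg (fun h => hno r h.1)] at hx
    exact hx
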